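/- Let n ≥ 2 and let D be any wire diagram on n wires (so D < 1̂ in P_n^*). Then any saturated chain from D to 1̂ in P_n^* whose label sequence is lexicographically smallest among all saturated chains from D to 1̂ has weakly ascending labels. -/

import Mathlib

open Equiv Finset

/-- A candidate wire diagram: a permutation of the `2 n` endpoint positions. -/
abbrev WDperm (n : ℕ) := Equiv.Perm (Fin (2 * n))

/-- `σ` is a wire diagram on `n` wires: a fixed-point-free involution of the `2 n` positions. -/
def IsWD {n : ℕ} (σ : WDperm n) : Prop := (∀ x, σ (σ x) = x) ∧ ∀ x, σ x ≠ x

instance IsWD.decPred {n : ℕ} : DecidablePred (@IsWD n) := fun σ => by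
  unfold IsWD; infer_instance

/-- Positions `a < c` are first endpoints of a pair of crossing wires `{a, σ a}`, `{c, σ c}`,
i.e. `a < c < σ a < σ c`. -/
def IsCrossing {n : ℕ} (σ : WDperm n) (a c : Fin (2 * n)) : Prop :=
  a < c ∧ c < σ a ∧ σ a < σ c

instance IsCrossing.dec {n : ℕ} (σ : WDperm n) (a c : Fin (2 * n)) :
    Decidable (IsCrossing σ a c) := by unfold IsCrossing; infer_instance

/-- The number `c(σ)` of crossings of `σ`. -/
def ncross {n : ℕ} (σ : WDperm n) : ℕ :=
  (Finset.univ.filter (fun p : Fin (2 * n) × Fin (2 * n) => IsCrossing σ p.1 p.2)).card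

/-- The nesting uncrossing of the crossing `{a, σ a}, {c, σ c}` (with `a < c < σ a < σ c`):
replace the pairs `{a,b},{c,d}` by `{a,d},{b,c}` where `b = σ a`, `d = σ c`. -/
def nestU {n : ℕ} (σ : WDperm n) (a c : Fin (2 * n)) : WDperm n :=
  Equiv.swap (σ a) (σ c) * σ * Equiv.swap (σ a) (σ c)

/-- The disjoint uncrossing: replace the pairs `{a,b},{c,d}` by `{a,c},{b,d}`. -/
def disjU {n : ℕ} (σ : WDperm n) (a c : Fin (2 * n)) : WDperm n :=
  Equiv.swap (σ a) c * σ * Equiv.swap (σ a) c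

/-- `τ` is obtained from `σ` by a nesting uncrossing of some crossing of `σ`. -/
def IsNestStep {n : ℕ} (σ τ : WDperm n) : Prop := ∃ a c, IsCrossing σ a c ∧ τ = nestU σ a c

/-- `τ` is obtained from `σ` by a disjoint uncrossing of some crossing of `σ`. -/
def IsDisjStep {n : ℕ} (σ τ : WDperm n) : Prop := ∃ a c, IsCrossing σ a c ∧ τ = disjU σ a c

/-- `τ` is obtained from `σ` by an uncrossing step that decreases the crossing number by one. -/
def UncCov {n : ℕ} (σ τ : WDperm n) : Prop :=
  (IsNestStep σ τ ∨ IsDisjStep σ τ) ∧ ncross τ + 1 = ncross σ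

/-- The dual uncrossing poset `P_n^*`: wire diagrams together with a top element `none = 1̂`
(the adjoined element `0̂` of `P_n`). -/
abbrev PStar (n : ℕ) := Option {σ : WDperm n // IsWD σ}

/-- The covering relation of `P_n^*`. -/
def Cov {n : ℕ} : PStar n → PStar n → Prop
  | some σ, some τ => UncCov σ.1 τ.1
  | some σ, none => ncross σ.1 = 0
  | none, _ => False

/-- The partial order of `P_n^*`: reflexive-transitive closure of the covering relation. -/
def ple {n : ℕ} : PStar n → PStar n → Prop := Relation.ReflTransGen Cov

/-- The (0-indexed) name `w(σ)(x)` of the wire through position `x`: the number of wires whose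
first endpoint is strictly smaller than the first endpoint of the wire through `x`. -/
def word {n : ℕ} (σ : WDperm n) (x : Fin (2 * n)) : ℕ :=
  (Finset.univ.filter (fun a : Fin (2 * n) => a < σ a ∧ a < min x (σ x))).card

/-- The start set `S(σ)`: the set of first endpoints of wires of `σ`. -/
def startSet {n : ℕ} (σ : WDperm n) : Finset (Fin (2 * n)) :=
  Finset.univ.filter (fun a => a < σ a)

/-- The noncrossing pair set `N(σ)` (on 0-indexed wire names): `(i, j)` with `i < j` for each
nested pair of wires `i < j`, and `(j, i)` for each disjoint pair of wires `i < j`. -/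
def NPairs {n : ℕ} (σ : WDperm n) : Set (ℕ × ℕ) :=
  {p | ∃ a c : Fin (2 * n), a < σ a ∧ c < σ c ∧ a < c ∧
        ((σ c < σ a ∧ p = (word σ a, word σ c)) ∨ (σ a < c ∧ p = (word σ c, word σ a)))}

/-- Lexicographic comparison of finsets via their increasing enumerations. -/
def finsetLexLE {m : ℕ} (A B : Finset (Fin m)) : Prop :=
  A = B ∨ List.Lex (· < ·) (A.sort (· ≤ ·)) (B.sort (· ≤ ·))

/-- Labels of the edge labeling: ordered pairs of (0-indexed) wire names, and a label `L`. -/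
inductive Lbl where
  | pair : ℕ → ℕ → Lbl
  | L : Lbl
deriving DecidableEq

/-- The total order `<λ` on labels. -/
def lblLT : Lbl → Lbl → Prop
  | .pair i j, .pair i' j' =>
      if i < j then (if i' < j' then i < i' ∨ (i = i' ∧ j < j') else True)
      else (if i' < j' then False else (j' < j ∨ (j = j' ∧ i' < i)))
  | .pair i j, .L => i < j
  | .L, .pair r s => s < r
  | .L, .L => False

/-- `≤λ` on labels. -/
def lblLE (p q : Lbl) : Prop := p = q ∨ lblLT p q

/-- The sorted list of positions where `σ` and `τ` differ. -/
def diffList {n : ℕ} (σ τ : WDperm n) : List (Fin (2 * n)) :=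
  (Finset.univ.filter (fun x => σ x ≠ τ x)).sort (· ≤ ·)

/-- The edge labeling `λ` of `P_n^*`: an uncrossing of the crossing formed by wires `k < m`
of the lower diagram gets label `(k, m)` if it is the nesting uncrossing and `(m, k)` if it is
the disjoint uncrossing; covers of the top element `1̂ = none` get the label `L`. -/
def lbl {n : ℕ} : PStar n → PStar n → Lbl
  | some σ, some τ =>
      match (diffList σ.1 τ.1)[0]?, (diffList σ.1 τ.1)[1]? with
      | some a, some c =>
          if τ.1 a = σ.1 c then Lbl.pair (word σ.1 a) (word σ.1 c)
          else Lbl.pair (word σ.1 c) (word σ.1 a)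
      | _, _ => Lbl.L
  | _, _ => Lbl.L

/-- `c` is a saturated chain from `u` to `v` in `P_n^*`. -/
def SatChain {n : ℕ} (c : List (PStar n)) (u v : PStar n) : Prop :=
  c.Chain' Cov ∧ c.head? = some u ∧ c.getLast? = some v

/-- The label sequence of a saturated chain. -/
def chainLabels {n : ℕ} (c : List (PStar n)) : List Lbl := c.zipWith lbl c.tail

/-- Lexicographic order on pairs of labels. -/
def pairLexLT (p q : Lbl × Lbl) : Prop := lblLT p.1 q.1 ∨ (p.1 = q.1 ∧ lblLT p.2 q.2)

/-- `x ⋖ y ⋖ z` is a topological ascent: its label pair is lexicographically strictly smaller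
than the label pair of every other saturated chain from `x` to `z`. -/
def TopAscent {n : ℕ} (x y z : PStar n) : Prop :=
  Cov x y ∧ Cov y z ∧ ∀ y' : PStar n, Cov x y' → Cov y' z → y' ≠ y →
    pairLexLT (lbl x y, lbl y z) (lbl x y', lbl y' z)

/-- `x ⋖ y ⋖ z` is a topological descent: a length-two chain that is not a topological ascent. -/
def TopDescent {n : ℕ} (x y z : PStar n) : Prop := Cov x y ∧ Cov y z ∧ ¬ TopAscent x y z

/-- Every length-two subchain of `c` is a topological ascent. -/
def AllTopAscents {n : ℕ} (c : List (PStar n)) : Prop :=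
  ∀ x y z : PStar n, [x, y, z] <:+: c → TopAscent x y z

/-- The number of inversions of a permutation. -/
def numInv {n : ℕ} (π : Equiv.Perm (Fin n)) : ℕ :=
  (Finset.univ.filter (fun p : Fin n × Fin n => p.1 < p.2 ∧ π p.2 < π p.1)).card

/-- One step of the Bruhat order: left multiplication by a transposition raising `inv` by one. -/
def BruhatStep {n : ℕ} (u v : Equiv.Perm (Fin n)) : Prop :=
  (∃ a b : Fin n, a ≠ b ∧ v = Equiv.swap a b * u) ∧ numInv v = numInv u + 1

/-- The Bruhat order on `S_n`. -/
def BruhatLE {n : ℕ} : Equiv.Perm (Fin n) → Equiv.Perm (Fin n) → Prop :=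
  Relation.ReflTransGen BruhatStep

/-- The set of second endpoints of wires of `σ`. -/
def secondEnds {n : ℕ} (σ : WDperm n) : Finset (Fin (2 * n)) :=
  Finset.univ.filter (fun b => σ b < b)

/-- The wire name at the `t`-th (0-indexed) second endpoint. -/
def piVal {n : ℕ} (σ : WDperm n) (t : ℕ) : ℕ :=
  (((secondEnds σ).sort (· ≤ ·))[t]?).elim 0 (word σ)

open Classical in
/-- The permutation `π(σ) ∈ S_n` reading the wire names at the second endpoints of `σ` in
increasing order of position. -/
noncomputable def piPerm {n : ℕ} (σ : WDperm n) : Equiv.Perm (Fin n) :=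
  if h : Function.Bijective (fun t : Fin n =>
      if ht : piVal σ (t : ℕ) < n then (⟨piVal σ (t : ℕ), ht⟩ : Fin n) else t)
  then Equiv.ofBijective _ h else 1

/-- Apply to the crossing at `(a, c)` the nesting (`nest = true`) or disjoint (`nest = false`)
uncrossing. -/
def uncrossAt {n : ℕ} (σ : WDperm n) (a c : Fin (2 * n)) (nest : Bool) : WDperm n :=
  if nest then nestU σ a c else disjU σ a c


/-! ### Auxiliary development -/

set_option maxHeartbeats 1000000

section AuxBasics
variable {n : ℕ} {σ : WDperm n} {a c : Fin (2 * n)}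

lemma count_aux (a c b d e f fp : ℕ) (h1 : a < c) (h2 : c < b) (h3 : b < d)
    (hcase : (e = b ∧ f = a ∧ fp = c) ∨ (e = d ∧ f = c ∧ fp = a) ∨
      (e ≠ a ∧ e ≠ b ∧ e ≠ c ∧ e ≠ d ∧ f ≠ a ∧ f ≠ b ∧ f ≠ c ∧ f ≠ d ∧ f ≠ e ∧ fp = f))
    (hmin : ¬(a < e ∧ e < c ∧ b < f ∧ f < d)) :
    ((if a < e ∧ e < b ∧ b < f then 1 else 0) + ((if c < e ∧ e < d ∧ d < f then 1 else 0) +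
      ((if e < a ∧ a < f ∧ f < b then 1 else 0) + (if e < c ∧ c < f ∧ f < d then 1 else 0)))) =
    ((if a < e ∧ e < d ∧ d < fp then 1 else 0) + ((if c < e ∧ e < b ∧ b < fp then 1 else 0) +
      ((if e < a ∧ a < fp ∧ fp < d then 1 else 0) + (if e < c ∧ c < fp ∧ fp < b then 1 else 0)))) := by
  rcases hcase with ⟨he, hf, hfp⟩ | ⟨he, hf, hfp⟩ | ⟨h4, h5, h6, h7, h8, h9, h10, h11, h12, hfp⟩
  · subst he hf hfp; split_ifs <;> omega
  · subst he hf hfp; split_ifs <;> omega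
  · subst hfp; split_ifs <;> omega

lemma nestU_apply (hinv : ∀ x, σ (σ x) = x) (hcr : IsCrossing σ a c) (x : Fin (2 * n)) :
    nestU σ a c x = if x = a then σ c else if x = σ c then a else
      if x = c then σ a else if x = σ a then c else σ x := by
  obtain ⟨h1, h2, h3⟩ := hcr
  have haa : a ≠ σ a := ne_of_lt (h1.trans h2)
  have hax : a ≠ σ c := ne_of_lt ((h1.trans h2).trans h3)
  have hca : c ≠ σ a := ne_of_lt h2
  have hcx : c ≠ σ c := ne_of_lt (h2.trans h3)
  simp only [nestU, Equiv.Perm.mul_apply]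
  split_ifs with hxa hxd hxc hxb
  · subst hxa; rw [Equiv.swap_apply_of_ne_of_ne haa hax, Equiv.swap_apply_left]
  · subst hxd; rw [Equiv.swap_apply_right, hinv, Equiv.swap_apply_of_ne_of_ne haa hax]
  · subst hxc; rw [Equiv.swap_apply_of_ne_of_ne hca hcx, Equiv.swap_apply_right]
  · subst hxb; rw [Equiv.swap_apply_left, hinv, Equiv.swap_apply_of_ne_of_ne hca hcx]
  · rw [Equiv.swap_apply_of_ne_of_ne hxb hxd,
      Equiv.swap_apply_of_ne_of_ne (fun h => hxa (σ.injective h)) (fun h => hxc (σ.injective h))]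

lemma disjU_apply (hinv : ∀ x, σ (σ x) = x) (hcr : IsCrossing σ a c) (x : Fin (2 * n)) :
    disjU σ a c x = if x = a then c else if x = c then a else
      if x = σ a then σ c else if x = σ c then σ a else σ x := by
  obtain ⟨h1, h2, h3⟩ := hcr
  have haa : a ≠ σ a := ne_of_lt (h1.trans h2)
  have hac : a ≠ c := ne_of_lt h1
  have hca : c ≠ σ a := ne_of_lt h2
  have hcc : c ≠ σ c := ne_of_lt (h2.trans h3)
  have hba : σ a ≠ σ c := ne_of_lt h3
  simp only [disjU, Equiv.Perm.mul_apply]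
  split_ifs with hxa hxc hxb hxd
  · subst hxa; rw [Equiv.swap_apply_of_ne_of_ne haa hac, Equiv.swap_apply_left]
  · subst hxc; rw [Equiv.swap_apply_right, hinv, Equiv.swap_apply_of_ne_of_ne haa hac]
  · subst hxb; rw [Equiv.swap_apply_left, Equiv.swap_apply_of_ne_of_ne hba.symm hcc.symm]
  · subst hxd; rw [Equiv.swap_apply_of_ne_of_ne (fun h => hba (h.symm)) hcc.symm, hinv,
      Equiv.swap_apply_right]
  · rw [Equiv.swap_apply_of_ne_of_ne hxb hxc,
      Equiv.swap_apply_of_ne_of_ne (fun h => hxa (σ.injective h))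
        (fun h => hxd (by rw [← h, hinv]))]

lemma IsWD.conj (hσ : IsWD σ) (s t : Fin (2 * n)) :
    IsWD (Equiv.swap s t * σ * Equiv.swap s t) := by
  constructor
  · intro x
    simp only [Equiv.Perm.mul_apply, Equiv.swap_apply_self, hσ.1]
  · intro x h
    simp only [Equiv.Perm.mul_apply] at h
    have := congrArg (Equiv.swap s t) h
    rw [Equiv.swap_apply_self] at this
    exact hσ.2 _ this

lemma IsWD.nestWD (hσ : IsWD σ) : IsWD (nestU σ a c) := hσ.conj _ _
lemma IsWD.disjWD (hσ : IsWD σ) : IsWD (disjU σ a c) := hσ.conj _ _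

variable (hinv : ∀ x, σ (σ x) = x) (hcr : IsCrossing σ a c)
include hinv hcr

lemma nestU_a : nestU σ a c a = σ c := by
  rw [nestU_apply hinv hcr, if_pos rfl]

lemma nestU_d : nestU σ a c (σ c) = a := by
  obtain ⟨h1, h2, h3⟩ := id hcr
  rw [nestU_apply hinv hcr, if_neg (ne_of_gt ((h1.trans h2).trans h3)), if_pos rfl]

lemma nestU_c : nestU σ a c c = σ a := by
  obtain ⟨h1, h2, h3⟩ := id hcr
  rw [nestU_apply hinv hcr, if_neg (ne_of_gt h1), if_neg (ne_of_lt (h2.trans h3)), if_pos rfl]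

lemma nestU_b : nestU σ a c (σ a) = c := by
  obtain ⟨h1, h2, h3⟩ := id hcr
  rw [nestU_apply hinv hcr, if_neg (ne_of_gt (h1.trans h2)), if_neg (ne_of_lt h3),
    if_neg (ne_of_gt h2), if_pos rfl]

lemma nestU_other {x : Fin (2 * n)} (hxa : x ≠ a) (hxc : x ≠ c) (hxb : x ≠ σ a)
    (hxd : x ≠ σ c) : nestU σ a c x = σ x := by
  rw [nestU_apply hinv hcr, if_neg hxa, if_neg hxd, if_neg hxc, if_neg hxb]

lemma disjU_a : disjU σ a c a = c := by
  rw [disjU_apply hinv hcr, if_pos rfl]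

lemma disjU_c : disjU σ a c c = a := by
  obtain ⟨h1, h2, h3⟩ := id hcr
  rw [disjU_apply hinv hcr, if_neg (ne_of_gt h1), if_pos rfl]

lemma disjU_b : disjU σ a c (σ a) = σ c := by
  obtain ⟨h1, h2, h3⟩ := id hcr
  rw [disjU_apply hinv hcr, if_neg (ne_of_gt (h1.trans h2)), if_neg (ne_of_gt h2), if_pos rfl]

lemma disjU_d : disjU σ a c (σ c) = σ a := by
  obtain ⟨h1, h2, h3⟩ := id hcr
  rw [disjU_apply hinv hcr, if_neg (ne_of_gt ((h1.trans h2).trans h3)),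
    if_neg (ne_of_gt (h2.trans h3)), if_neg (ne_of_gt h3), if_pos rfl]

lemma disjU_other {x : Fin (2 * n)} (hxa : x ≠ a) (hxc : x ≠ c) (hxb : x ≠ σ a)
    (hxd : x ≠ σ c) : disjU σ a c x = σ x := by
  rw [disjU_apply hinv hcr, if_neg hxa, if_neg hxc, if_neg hxb, if_neg hxd]

end AuxBasics

section AuxWord
variable {n : ℕ} {σ : WDperm n} {a c : Fin (2 * n)}
variable (hinv : ∀ x, σ (σ x) = x) (hcr : IsCrossing σ a c)
include hinv hcr

lemma start_iff_nestU (x : Fin (2 * n)) : x < nestU σ a c x ↔ x < σ x := by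
  obtain ⟨h1, h2, h3⟩ := id hcr
  by_cases hxa : x = a
  · subst hxa; rw [nestU_a hinv hcr]
    exact iff_of_true ((h1.trans h2).trans h3) (h1.trans h2)
  by_cases hxd : x = σ c
  · subst hxd; rw [nestU_d hinv hcr, hinv]
    exact iff_of_false (not_lt.2 ((h1.trans h2).trans h3).le) (not_lt.2 (h2.trans h3).le)
  by_cases hxc : x = c
  · subst hxc; rw [nestU_c hinv hcr]
    exact iff_of_true h2 (h2.trans h3)
  by_cases hxb : x = σ a
  · subst hxb; rw [nestU_b hinv hcr, hinv]
    exact iff_of_false (not_lt.2 h2.le) (not_lt.2 (h1.trans h2).le)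
  · rw [nestU_other hinv hcr hxa hxc hxb hxd]

lemma word_nestU {x : Fin (2 * n)} (hx : x < σ x) : word (nestU σ a c) x = word σ x := by
  have hx' : x < nestU σ a c x := (start_iff_nestU hinv hcr x).2 hx
  unfold word
  congr 1
  apply Finset.filter_congr
  intro s _
  rw [min_eq_left hx.le, min_eq_left hx'.le, start_iff_nestU hinv hcr s]

omit hinv hcr

lemma word_lt_word {x y : Fin (2 * n)} (hx : x < σ x) (hy : y < σ y) (hxy : x < y) :
    word σ x < word σ y := by
  apply Finset.card_lt_card
  have hsub : Finset.univ.filter (fun s => s < σ s ∧ s < min x (σ x)) ⊆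
      Finset.univ.filter (fun s => s < σ s ∧ s < min y (σ y)) := by
    intro s hs
    rw [Finset.mem_filter, min_eq_left hx.le] at hs
    rw [Finset.mem_filter, min_eq_left hy.le]
    exact ⟨Finset.mem_univ _, hs.2.1, hs.2.2.trans hxy⟩
  rw [Finset.ssubset_iff_of_subset hsub]
  refine ⟨x, ?_, ?_⟩
  · rw [Finset.mem_filter, min_eq_left hy.le]; exact ⟨Finset.mem_univ _, hx, hxy⟩
  · rw [Finset.mem_filter, min_eq_left hx.le]; exact fun h => lt_irrefl x h.2.2

include hinv hcr

lemma diff_filter_nestU :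
    Finset.univ.filter (fun x => σ x ≠ nestU σ a c x) =
      insert a (insert c (insert (σ a) {σ c})) := by
  obtain ⟨h1, h2, h3⟩ := id hcr
  ext x
  simp only [Finset.mem_filter, Finset.mem_univ, true_and, Finset.mem_insert,
    Finset.mem_singleton]
  constructor
  · intro h
    by_contra hx
    push_neg at hx
    obtain ⟨hxa, hxc, hxb, hxd⟩ := hx
    exact h (nestU_other hinv hcr hxa hxc hxb hxd).symm
  · rintro (rfl | rfl | rfl | rfl)
    · rw [nestU_a hinv hcr]; exact ne_of_lt h3
    · rw [nestU_c hinv hcr]; exact ne_of_gt h3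
    · rw [nestU_b hinv hcr, hinv]; exact ne_of_lt h1
    · rw [nestU_d hinv hcr, hinv]; exact ne_of_gt h1

lemma diff_filter_disjU :
    Finset.univ.filter (fun x => σ x ≠ disjU σ a c x) =
      insert a (insert c (insert (σ a) {σ c})) := by
  obtain ⟨h1, h2, h3⟩ := id hcr
  ext x
  simp only [Finset.mem_filter, Finset.mem_univ, true_and, Finset.mem_insert,
    Finset.mem_singleton]
  constructor
  · intro h
    by_contra hx
    push_neg at hx
    obtain ⟨hxa, hxc, hxb, hxd⟩ := hx
    exact h (disjU_other hinv hcr hxa hxc hxb hxd).symm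
  · rintro (rfl | rfl | rfl | rfl)
    · rw [disjU_a hinv hcr]; exact ne_of_gt h2
    · rw [disjU_c hinv hcr]; exact ne_of_gt (h1.trans (h2.trans h3))
    · rw [disjU_b hinv hcr, hinv]; exact ne_of_lt ((h1.trans h2).trans h3)
    · rw [disjU_d hinv hcr, hinv]; exact ne_of_lt h2

omit hinv hcr

lemma sort_four {w x y z : Fin (2 * n)} (h1 : w < x) (h2 : x < y) (h3 : y < z) :
    (insert w (insert x (insert y ({z} : Finset (Fin (2 * n))))) : Finset (Fin (2 * n))).sort
      (· ≤ ·) = [w, x, y, z] := by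
  rw [Finset.sort_insert, Finset.sort_insert, Finset.sort_insert, Finset.sort_singleton]
  · simp only [Finset.mem_singleton]; rintro b rfl; exact h3.le
  · simp only [Finset.mem_singleton]; exact ne_of_lt h3
  · simp only [Finset.mem_insert, Finset.mem_singleton]
    rintro b (rfl | rfl)
    exacts [h2.le, (h2.trans h3).le]
  · simp only [Finset.mem_insert, Finset.mem_singleton, not_or]
    exact ⟨ne_of_lt h2, ne_of_lt (h2.trans h3)⟩
  · simp only [Finset.mem_insert, Finset.mem_singleton]
    rintro b (rfl | rfl | rfl)
    exacts [h1.le, (h1.trans h2).le, (h1.trans (h2.trans h3)).le]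
  · simp only [Finset.mem_insert, Finset.mem_singleton, not_or]
    exact ⟨ne_of_lt h1, ne_of_lt (h1.trans h2), ne_of_lt (h1.trans (h2.trans h3))⟩

include hinv hcr

lemma diffList_nestU : diffList σ (nestU σ a c) = [a, c, σ a, σ c] := by
  obtain ⟨h1, h2, h3⟩ := id hcr
  rw [diffList, diff_filter_nestU hinv hcr, sort_four h1 h2 h3]

lemma diffList_disjU : diffList σ (disjU σ a c) = [a, c, σ a, σ c] := by
  obtain ⟨h1, h2, h3⟩ := id hcr
  rw [diffList, diff_filter_disjU hinv hcr, sort_four h1 h2 h3]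

end AuxWord

section AuxLbl
variable {n : ℕ} (σs τs : {σ : WDperm n // IsWD σ}) {a c : Fin (2 * n)}

lemma lbl_nestU (hcr : IsCrossing σs.1 a c) (hτ : τs.1 = nestU σs.1 a c) :
    lbl (some σs) (some τs) = Lbl.pair (word σs.1 a) (word σs.1 c) := by
  have hinv := σs.2.1
  have hd : diffList σs.1 τs.1 = [a, c, σs.1 a, σs.1 c] := by
    rw [hτ]; exact diffList_nestU hinv hcr
  have hta : τs.1 a = σs.1 c := by rw [hτ]; exact nestU_a hinv hcr
  simp only [lbl, hd, List.getElem?_cons_zero, List.getElem?_cons_succ, hta, if_true, if_pos trivial]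

lemma lbl_disjU (hcr : IsCrossing σs.1 a c) (hτ : τs.1 = disjU σs.1 a c) :
    lbl (some σs) (some τs) = Lbl.pair (word σs.1 c) (word σs.1 a) := by
  have hinv := σs.2.1
  have hd : diffList σs.1 τs.1 = [a, c, σs.1 a, σs.1 c] := by
    rw [hτ]; exact diffList_disjU hinv hcr
  have hta : τs.1 a = c := by rw [hτ]; exact disjU_a hinv hcr
  have hne : τs.1 a ≠ σs.1 c := by
    rw [hta]; exact ne_of_lt (hcr.2.1.trans hcr.2.2)
  simp only [lbl, hd, List.getElem?_cons_zero, List.getElem?_cons_succ, if_neg hne]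

lemma lbl_top : lbl (some σs) (none : PStar n) = Lbl.L := rfl

end AuxLbl

section AuxNcross
variable {n : ℕ}

private def crsF (σ : WDperm n) : Finset (Fin (2 * n) × Fin (2 * n)) :=
  Finset.univ.filter (fun p => IsCrossing σ p.1 p.2)

private lemma ncross_eq_crsF (σ : WDperm n) : ncross σ = (crsF σ).card := rfl

private lemma mem_crsF {σ : WDperm n} {p : Fin (2 * n) × Fin (2 * n)} :
    p ∈ crsF σ ↔ IsCrossing σ p.1 p.2 := by
  simp [crsF]

private def Tch (a c : Fin (2 * n)) (p : Fin (2 * n) × Fin (2 * n)) : Prop :=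
  p.1 = a ∨ p.1 = c ∨ p.2 = a ∨ p.2 = c

private instance (a c : Fin (2 * n)) : DecidablePred (Tch a c) := fun p => by
  unfold Tch; infer_instance

private def keyF (a c : Fin (2 * n)) (p : Fin (2 * n) × Fin (2 * n)) : Fin (2 * n) :=
  if p.1 = a ∨ p.1 = c then p.2 else p.1

variable {σ : WDperm n} {a c : Fin (2 * n)}

/-- Crossings not touching the wires of `a`, `c` are unchanged by the nesting uncrossing. -/
private lemma crossing_iff_nestU (hinv : ∀ x, σ (σ x) = x) (hcr : IsCrossing σ a c)
    {x y : Fin (2 * n)} (hxa : x ≠ a) (hxc : x ≠ c) (hya : y ≠ a) (hyc : y ≠ c) :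
    IsCrossing σ x y ↔ IsCrossing (nestU σ a c) x y := by
  obtain ⟨h1, h2, h3⟩ := id hcr
  have hab : a < σ a := h1.trans h2
  have hcd : c < σ c := h2.trans h3
  by_cases hxb : x = σ a
  · subst hxb
    refine iff_of_false (fun h => ?_) (fun h => ?_)
    · have hy := h.2.1; rw [hinv] at hy
      exact lt_irrefl a ((hab.trans h.1).trans hy)
    · have hy := h.2.1; rw [nestU_b hinv hcr] at hy
      exact lt_irrefl c ((h2.trans h.1).trans hy)
  by_cases hxd : x = σ c
  · subst hxd
    refine iff_of_false (fun h => ?_) (fun h => ?_)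
    · have hy := h.2.1; rw [hinv] at hy
      exact lt_irrefl c ((hcd.trans h.1).trans hy)
    · have hy := h.2.1; rw [nestU_d hinv hcr] at hy
      exact lt_irrefl a (((hab.trans h3).trans h.1).trans hy)
  by_cases hyb : y = σ a
  · subst hyb
    refine iff_of_false (fun h => ?_) (fun h => ?_)
    · have hs := h.2.2; rw [hinv] at hs
      exact lt_irrefl (σ a) ((h.2.1.trans hs).trans hab)
    · have hs := h.2.2; rw [nestU_b hinv hcr] at hs
      exact lt_irrefl (σ a) ((h.2.1.trans hs).trans h2)
  by_cases hyd : y = σ c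
  · subst hyd
    refine iff_of_false (fun h => ?_) (fun h => ?_)
    · have hs := h.2.2; rw [hinv] at hs
      exact lt_irrefl (σ c) ((h.2.1.trans hs).trans hcd)
    · have hs := h.2.2; rw [nestU_d hinv hcr] at hs
      exact lt_irrefl (σ c) ((h.2.1.trans hs).trans (hab.trans h3))
  · unfold IsCrossing
    rw [nestU_other hinv hcr hxa hxc hxb hxd, nestU_other hinv hcr hya hyc hyb hyd]

private lemma perE (hinv : ∀ x, σ (σ x) = x) (hfpf : ∀ x, σ x ≠ x) (hcr : IsCrossing σ a c)
    (hmin : ∀ x y, IsCrossing σ x y → a < x ∨ (a = x ∧ c ≤ y)) (e : Fin (2 * n)) :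
    (((crsF σ).filter (Tch a c)).filter (fun p => keyF a c p = e)).card =
    (((crsF (nestU σ a c)).filter (Tch a c)).filter (fun p => keyF a c p = e)).card +
      (if e = c then 1 else 0) := by
  obtain ⟨h1, h2, h3⟩ := id hcr
  have hab : a < σ a := h1.trans h2
  have hcd : c < σ c := h2.trans h3
  set τ := nestU σ a c with hτdef
  by_cases hea : e = a
  · have hemp : ∀ ρ : WDperm n,
        ((crsF ρ).filter (Tch a c)).filter (fun p => keyF a c p = e) = ∅ := by
      intro ρ
      rw [Finset.filter_eq_empty_iff]
      rintro p hp hkey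
      rw [Finset.mem_filter, mem_crsF] at hp
      unfold keyF at hkey
      by_cases hone : p.1 = a ∨ p.1 = c
      · rw [if_pos hone] at hkey
        rcases hone with hpa | hpc
        · have := hp.1.1; rw [hpa, hkey, hea] at this; exact lt_irrefl a this
        · have := hp.1.1; rw [hpc, hkey, hea] at this; exact lt_irrefl c (this.trans h1)
      · rw [if_neg hone] at hkey
        exact hone (Or.inl (hkey.trans hea))
    rw [hemp σ, hemp τ, if_neg (fun h => ne_of_lt h1 (hea.symm.trans h))]
    simp
  by_cases hec : e = c
  · have hfσ : ((crsF σ).filter (Tch a c)).filter (fun p => keyF a c p = e) = {(a, e)} := by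
      ext p
      rw [Finset.mem_filter, Finset.mem_filter, mem_crsF, Finset.mem_singleton]
      constructor
      · rintro ⟨⟨hcrs, hT⟩, hkey⟩
        unfold keyF at hkey
        by_cases hone : p.1 = a ∨ p.1 = c
        · rw [if_pos hone] at hkey
          rcases hone with hpa | hpc
          · exact Prod.ext hpa hkey
          · exfalso; have := hcrs.1; rw [hpc, hkey, hec] at this; exact lt_irrefl c this
        · rw [if_neg hone] at hkey
          exact absurd (Or.inr (hkey.trans hec)) hone
      · rintro rfl
        refine ⟨⟨by rw [hec]; exact hcr, Or.inl rfl⟩, ?_⟩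
        unfold keyF
        rw [if_pos (Or.inl rfl)]
    have hfτ : ((crsF τ).filter (Tch a c)).filter (fun p => keyF a c p = e) = ∅ := by
      rw [Finset.filter_eq_empty_iff]
      rintro p hp hkey
      rw [Finset.mem_filter, mem_crsF] at hp
      unfold keyF at hkey
      by_cases hone : p.1 = a ∨ p.1 = c
      · rw [if_pos hone] at hkey
        rcases hone with hpa | hpc
        · have hτc := hp.1.2.2
          rw [hpa, hkey, hec, nestU_a hinv hcr, nestU_c hinv hcr] at hτc
          exact lt_irrefl _ (h3.trans hτc)
        · have := hp.1.1; rw [hpc, hkey, hec] at this; exact lt_irrefl c this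
      · rw [if_neg hone] at hkey
        exact hone (Or.inr (hkey.trans hec))
    rw [hfσ, hfτ, if_pos hec, Finset.card_singleton, Finset.card_empty]
  · -- generic fiber e ∉ {a, c}
    have hfs : ∀ ρ : WDperm n, ((crsF ρ).filter (Tch a c)).filter (fun p => keyF a c p = e) =
        ({(a, e), (c, e), (e, a), (e, c)} : Finset (Fin (2 * n) × Fin (2 * n))).filter
          (fun p => IsCrossing ρ p.1 p.2) := by
      intro ρ
      ext p
      rw [Finset.mem_filter, Finset.mem_filter, Finset.mem_filter, mem_crsF]
      simp only [Finset.mem_insert, Finset.mem_singleton]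
      constructor
      · rintro ⟨⟨hcrs, hT⟩, hkey⟩
        unfold keyF at hkey
        by_cases hone : p.1 = a ∨ p.1 = c
        · rw [if_pos hone] at hkey
          rcases hone with hpa | hpc
          · exact ⟨Or.inl (Prod.ext hpa hkey), hcrs⟩
          · exact ⟨Or.inr (Or.inl (Prod.ext hpc hkey)), hcrs⟩
        · rw [if_neg hone] at hkey
          rcases hT with h | h | h | h
          · exact absurd (Or.inl h) hone
          · exact absurd (Or.inr h) hone
          · exact ⟨Or.inr (Or.inr (Or.inl (Prod.ext hkey h))), hcrs⟩
          · exact ⟨Or.inr (Or.inr (Or.inr (Prod.ext hkey h))), hcrs⟩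
      · rintro ⟨(rfl | rfl | rfl | rfl), hcrs⟩ <;>
          refine ⟨⟨hcrs, ?_⟩, ?_⟩
        · exact Or.inl rfl
        · unfold keyF; rw [if_pos (Or.inl rfl)]
        · exact Or.inr (Or.inl rfl)
        · unfold keyF; rw [if_pos (Or.inr rfl)]
        · exact Or.inr (Or.inr (Or.inl rfl))
        · unfold keyF; rw [if_neg (by push_neg; exact ⟨hea, hec⟩)]
        · exact Or.inr (Or.inr (Or.inr rfl))
        · unfold keyF; rw [if_neg (by push_neg; exact ⟨hea, hec⟩)]
    rw [hfs σ, hfs τ, if_neg hec, add_zero]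
    -- explicit四-element sums
    have H1 : (a : ℕ) < c := h1
    have H2 : (c : ℕ) < (σ a : ℕ) := h2
    have H3 : ((σ a : Fin (2 * n)) : ℕ) < (σ c : ℕ) := h3
    have Hea : (e : ℕ) ≠ a := fun h => hea (Fin.ext h)
    have Hec : (e : ℕ) ≠ c := fun h => hec (Fin.ext h)
    have d1 : ((a, e) : Fin (2 * n) × Fin (2 * n)) ∉
        ({(c, e), (e, a), (e, c)} : Finset (Fin (2 * n) × Fin (2 * n))) := by
      simp only [Finset.mem_insert, Finset.mem_singleton, Prod.mk.injEq, not_or, Fin.ext_iff]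
      omega
    have d2 : ((c, e) : Fin (2 * n) × Fin (2 * n)) ∉
        ({(e, a), (e, c)} : Finset (Fin (2 * n) × Fin (2 * n))) := by
      simp only [Finset.mem_insert, Finset.mem_singleton, Prod.mk.injEq, not_or, Fin.ext_iff]
      omega
    have d3 : ((e, a) : Fin (2 * n) × Fin (2 * n)) ∉
        ({(e, c)} : Finset (Fin (2 * n) × Fin (2 * n))) := by
      simp only [Finset.mem_singleton, Prod.mk.injEq, not_and, Fin.ext_iff]
      omega
    rw [Finset.card_filter, Finset.card_filter, Finset.sum_insert d1, Finset.sum_insert d2,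
      Finset.sum_insert d3, Finset.sum_singleton, Finset.sum_insert d1, Finset.sum_insert d2,
      Finset.sum_insert d3, Finset.sum_singleton]
    simp only [IsCrossing, hτdef, nestU_a hinv hcr, nestU_c hinv hcr]
    -- now three cases for the position of e
    have hminN : ∀ f : Fin (2 * n), σ e = f →
        ¬((a : ℕ) < e ∧ (e : ℕ) < c ∧ (σ a : ℕ) < f ∧ (f : ℕ) < (σ c : ℕ)) := by
      rintro f rfl ⟨q1, q2, q3, q4⟩
      have hcross : IsCrossing σ a e :=
        ⟨Fin.lt_def.2 q1, Fin.lt_def.2 (q2.trans H2), Fin.lt_def.2 q3⟩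
      rcases hmin a e hcross with hlt | ⟨_, hle⟩
      · exact lt_irrefl a hlt
      · exact absurd hle (not_le.2 (Fin.lt_def.2 q2))
    by_cases heb : e = σ a
    · subst heb
      simp only [hinv, nestU_b hinv hcr]
      simp only [Fin.lt_def]
      exact count_aux a.val c.val (σ a).val (σ c).val (σ a).val a.val c.val H1 H2 H3
        (Or.inl ⟨rfl, rfl, rfl⟩) (hminN a (hinv a))
    by_cases hed : e = σ c
    · subst hed
      simp only [hinv, nestU_d hinv hcr]
      simp only [Fin.lt_def]
      exact count_aux a.val c.val (σ a).val (σ c).val (σ c).val c.val a.val H1 H2 H3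
        (Or.inr (Or.inl ⟨rfl, rfl, rfl⟩)) (hminN c (hinv c))
    · have hτe : nestU σ a c e = σ e := nestU_other hinv hcr hea hec heb hed
      simp only [hτe]
      simp only [Fin.lt_def]
      refine count_aux a.val c.val (σ a).val (σ c).val e.val (σ e).val (σ e).val H1 H2 H3
        (Or.inr (Or.inr ⟨Hea, ?_, Hec, ?_, ?_, ?_, ?_, ?_, ?_, rfl⟩)) (hminN (σ e) rfl)
      · exact fun h => heb (Fin.ext h)
      · exact fun h => hed (Fin.ext h)
      · exact fun h => heb (by have h2 := congrArg σ (Fin.ext h); rwa [hinv] at h2)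
      · exact fun h => hea (by have h2 := congrArg σ (Fin.ext h); rwa [hinv, hinv] at h2)
      · exact fun h => hed (by have h2 := congrArg σ (Fin.ext h); rwa [hinv] at h2)
      · exact fun h => hec (by have h2 := congrArg σ (Fin.ext h); rwa [hinv, hinv] at h2)
      · exact fun h => hfpf e (Fin.ext h)

/-- The key counting lemma: nesting uncrossing of the minimal crossing drops `ncross` by 1. -/
lemma ncross_nestU (hσ : IsWD σ) (hcr : IsCrossing σ a c)
    (hmin : ∀ x y, IsCrossing σ x y → a < x ∨ (a = x ∧ c ≤ y)) :
    ncross (nestU σ a c) + 1 = ncross σ := by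
  obtain ⟨hinv, hfpf⟩ := hσ
  obtain ⟨h1, h2, h3⟩ := id hcr
  have hab : a < σ a := h1.trans h2
  have hcd : c < σ c := h2.trans h3
  set τ := nestU σ a c with hτdef
  -- split into touching and non-touching parts
  have hsplit : ∀ ρ : WDperm n, ncross ρ =
      ((crsF ρ).filter (Tch a c)).card + ((crsF ρ).filter (fun p => ¬ Tch a c p)).card := by
    intro ρ
    rw [ncross_eq_crsF, Finset.card_filter_add_card_filter_not]
  -- non-touching parts agree
  have hNT : (crsF σ).filter (fun p => ¬ Tch a c p) = (crsF τ).filter (fun p => ¬ Tch a c p) := by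
    ext ⟨x, y⟩
    simp only [Finset.mem_filter, mem_crsF, Tch, not_or]
    constructor
    · rintro ⟨hc, hxa, hxc, hya, hyc⟩
      exact ⟨(crossing_iff_nestU hinv hcr hxa hxc hya hyc).1 hc, hxa, hxc, hya, hyc⟩
    · rintro ⟨hc, hxa, hxc, hya, hyc⟩
      exact ⟨(crossing_iff_nestU hinv hcr hxa hxc hya hyc).2 hc, hxa, hxc, hya, hyc⟩
  -- fiberwise decomposition of the touching parts
  have hfib : ∀ ρ : WDperm n, ((crsF ρ).filter (Tch a c)).card =
      ∑ e : Fin (2 * n), (((crsF ρ).filter (Tch a c)).filter (fun p => keyF a c p = e)).card :=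
    fun ρ => Finset.card_eq_sum_card_fiberwise (fun x _ => Finset.mem_univ _)
  -- per-fiber comparison
  have hperE : ∀ e : Fin (2 * n),
      (((crsF σ).filter (Tch a c)).filter (fun p => keyF a c p = e)).card =
      (((crsF τ).filter (Tch a c)).filter (fun p => keyF a c p = e)).card +
        (if e = c then 1 else 0) := fun e => perE hinv hfpf hcr hmin e
  have hT : ((crsF σ).filter (Tch a c)).card = ((crsF τ).filter (Tch a c)).card + 1 := by
    rw [hfib σ, hfib τ]
    calc ∑ e : Fin (2 * n), (((crsF σ).filter (Tch a c)).filter (fun p => keyF a c p = e)).card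
        = ∑ e : Fin (2 * n), ((((crsF τ).filter (Tch a c)).filter (fun p => keyF a c p = e)).card
            + (if e = c then 1 else 0)) := Finset.sum_congr rfl (fun e _ => hperE e)
      _ = (∑ e : Fin (2 * n), (((crsF τ).filter (Tch a c)).filter
              (fun p => keyF a c p = e)).card) + ∑ e : Fin (2 * n), (if e = c then 1 else 0) :=
            Finset.sum_add_distrib
      _ = _ := by rw [Finset.sum_ite_eq' Finset.univ c (fun _ => 1), if_pos (Finset.mem_univ c)]
  have e1 := hsplit σ
  have e2 := hsplit τ
  rw [hNT] at e1
  omega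

end AuxNcross

section AuxMin
variable {n : ℕ} {σ : WDperm n} {a c : Fin (2 * n)}

/-- All crossings of the nesting uncrossing of the minimal crossing are lex-≥ the minimal one. -/
lemma nestU_crossing_ge (hinv : ∀ x, σ (σ x) = x) (hcr : IsCrossing σ a c)
    (hmin : ∀ x y, IsCrossing σ x y → a < x ∨ (a = x ∧ c ≤ y)) :
    ∀ x y, IsCrossing (nestU σ a c) x y → a < x ∨ (a = x ∧ c ≤ y) := by
  obtain ⟨h1, h2, h3⟩ := id hcr
  have hab : a < σ a := h1.trans h2
  have hcd : c < σ c := h2.trans h3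
  intro x y hxy
  by_contra hcon
  push_neg at hcon
  obtain ⟨h4, h5⟩ := hcon
  rcases eq_or_lt_of_le h4 with hxa | hxa
  · -- x = a, y < c
    have hyc : y < c := h5 hxa.symm
    rw [hxa] at hxy
    obtain ⟨q1, q2, q3⟩ := hxy
    rw [nestU_a hinv hcr] at q2 q3
    have hyne1 : y ≠ a := ne_of_gt q1
    have hyne2 : y ≠ c := ne_of_lt hyc
    have hyne3 : y ≠ σ a := ne_of_lt (hyc.trans h2)
    have hyne4 : y ≠ σ c := ne_of_lt q2
    rw [nestU_other hinv hcr hyne1 hyne2 hyne3 hyne4] at q3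
    have hc2 : IsCrossing σ a y := ⟨q1, hyc.trans h2, h3.trans q3⟩
    rcases hmin a y hc2 with h | ⟨_, h⟩
    · exact lt_irrefl a h
    · exact absurd h (not_le.2 hyc)
  · -- x < a
    obtain ⟨q1, q2, q3⟩ := hxy
    have hxne1 : x ≠ a := ne_of_lt hxa
    have hxne2 : x ≠ c := ne_of_lt (hxa.trans h1)
    have hxne3 : x ≠ σ a := ne_of_lt (hxa.trans hab)
    have hxne4 : x ≠ σ c := ne_of_lt (hxa.trans (hab.trans h3))
    rw [nestU_other hinv hcr hxne1 hxne2 hxne3 hxne4] at q2 q3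
    have hcontra : ∀ u v, IsCrossing σ u v → u = x → False := by
      rintro u v hc rfl
      rcases hmin u v hc with h | ⟨h, _⟩
      · exact absurd (h.trans hxa) (lt_irrefl a)
      · exact absurd (h ▸ hxa) (lt_irrefl a)
    by_cases hya : y = a
    · rw [hya] at q2
      rw [hya, nestU_a hinv hcr] at q3
      by_cases hlt : σ x < σ a
      · exact hcontra x a ⟨hxa, q2, hlt⟩ rfl
      · have hne : σ a ≠ σ x := fun h => hxne1 (σ.injective h.symm)
        have hgt : σ a < σ x := lt_of_le_of_ne (le_of_not_gt hlt) hne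
        exact hcontra x c ⟨hxa.trans h1, h2.trans hgt, q3⟩ rfl
    by_cases hyc : y = c
    · rw [hyc] at q2
      rw [hyc, nestU_c hinv hcr] at q3
      exact hcontra x a ⟨hxa, h1.trans q2, q3⟩ rfl
    by_cases hyb : y = σ a
    · rw [hyb] at q2
      rw [hyb, nestU_b hinv hcr] at q3
      exact absurd ((q2.trans q3).trans h2) (lt_irrefl (σ a))
    by_cases hyd : y = σ c
    · rw [hyd] at q2
      rw [hyd, nestU_d hinv hcr] at q3
      exact absurd ((q2.trans q3).trans (hab.trans h3)) (lt_irrefl (σ c))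
    · rw [nestU_other hinv hcr hya hyc hyb hyd] at q3
      exact hcontra x y ⟨q1, q2, q3⟩ rfl

end AuxMin

section AuxMinCr
variable {n : ℕ}

private lemma crsF_nonempty {σ : WDperm n} (h : ncross σ ≠ 0) : (crsF σ).Nonempty :=
  Finset.card_pos.1 (Nat.pos_of_ne_zero (by rwa [← ncross_eq_crsF]))

noncomputable def minA (σ : WDperm n) (h : ncross σ ≠ 0) : Fin (2 * n) :=
  ((crsF σ).image Prod.fst).min' ((crsF_nonempty h).image _)

private lemma minA_filter_nonempty (σ : WDperm n) (h : ncross σ ≠ 0) :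
    (((crsF σ).filter (fun p => p.1 = minA σ h)).image Prod.snd).Nonempty := by
  have hm := ((crsF σ).image Prod.fst).min'_mem ((crsF_nonempty h).image _)
  rw [Finset.mem_image] at hm
  obtain ⟨p, hp, hfst⟩ := hm
  exact ⟨p.2, Finset.mem_image_of_mem _ (Finset.mem_filter.2 ⟨hp, hfst⟩)⟩

noncomputable def minC (σ : WDperm n) (h : ncross σ ≠ 0) : Fin (2 * n) :=
  (((crsF σ).filter (fun p => p.1 = minA σ h)).image Prod.snd).min' (minA_filter_nonempty σ h)

lemma minCr_cross (σ : WDperm n) (h : ncross σ ≠ 0) : IsCrossing σ (minA σ h) (minC σ h) := by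
  have hm := (((crsF σ).filter (fun p => p.1 = minA σ h)).image Prod.snd).min'_mem
    (minA_filter_nonempty σ h)
  rw [Finset.mem_image] at hm
  obtain ⟨p, hp, hsnd⟩ := hm
  rw [Finset.mem_filter, mem_crsF] at hp
  have := hp.1
  rwa [hp.2, hsnd] at this

lemma minCr_min (σ : WDperm n) (h : ncross σ ≠ 0) {x y : Fin (2 * n)}
    (hxy : IsCrossing σ x y) : minA σ h < x ∨ (minA σ h = x ∧ minC σ h ≤ y) := by
  have hmem : (x, y) ∈ crsF σ := mem_crsF.2 hxy
  have hax : minA σ h ≤ x :=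
    Finset.min'_le _ _ (Finset.mem_image_of_mem Prod.fst hmem)
  rcases lt_or_eq_of_le hax with hlt | heq
  · exact Or.inl hlt
  · refine Or.inr ⟨heq, Finset.min'_le _ _ ?_⟩
    exact Finset.mem_image_of_mem Prod.snd (Finset.mem_filter.2 ⟨hmem, heq.symm⟩)

end AuxMinCr

section AuxChain
variable {n : ℕ}

lemma lblLT_asc {i j i' j' : ℕ} (hij : i < j) (hij' : i' < j')
    (h : i < i' ∨ (i = i' ∧ j < j')) : lblLT (.pair i j) (.pair i' j') := by
  have hd : lblLT (.pair i j) (.pair i' j') = if i < j then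
      (if i' < j' then i < i' ∨ (i = i' ∧ j < j') else True)
      else (if i' < j' then False else (j' < j ∨ (j = j' ∧ i' < i))) := rfl
  rw [hd, if_pos hij, if_pos hij']
  exact h

lemma lblLT_asc_desc {i j r s : ℕ} (hij : i < j) (hsr : s < r) :
    lblLT (.pair i j) (.pair r s) := by
  have hd : lblLT (.pair i j) (.pair r s) = if i < j then
      (if r < s then i < r ∨ (i = r ∧ j < s) else True)
      else (if r < s then False else (s < j ∨ (j = s ∧ r < i))) := rfl
  rw [hd, if_pos hij, if_neg (not_lt.2 hsr.le)]
  trivial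

lemma lblLT_asc_L {i j : ℕ} (hij : i < j) : lblLT (.pair i j) Lbl.L := hij

private lemma chainLabels_cons₂ {x y : PStar n} {t : List (PStar n)} :
    chainLabels (x :: y :: t) = lbl x y :: chainLabels (y :: t) := rfl

/-- The greedy chain. -/
noncomputable def gch (σs : {σ : WDperm n // IsWD σ}) : List (PStar n) :=
  if h : ncross σs.1 = 0 then [some σs, none]
  else some σs :: gch ⟨nestU σs.1 (minA σs.1 h) (minC σs.1 h), σs.2.nestWD⟩
termination_by ncross σs.1
decreasing_by
  have := ncross_nestU σs.2 (minCr_cross σs.1 h) (fun x y hxy => minCr_min σs.1 h hxy)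
  omega

private lemma gch_eq (σs : {σ : WDperm n // IsWD σ}) :
    gch σs = if h : ncross σs.1 = 0 then [some σs, none]
      else some σs :: gch ⟨nestU σs.1 (minA σs.1 h) (minC σs.1 h), σs.2.nestWD⟩ := by
  rw [gch]

/-- Main induction: the greedy chain is a saturated chain to the top, has weakly ascending
labels, and its label sequence is lexicographically minimal. -/
private lemma gch_main : ∀ N : ℕ, ∀ σs : {σ : WDperm n // IsWD σ}, ncross σs.1 = N →
    (SatChain (gch σs) (some σs) none ∧
     List.Chain' lblLE (chainLabels (gch σs)) ∧
     (∀ c' : List (PStar n), SatChain c' (some σs) none →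
        chainLabels (gch σs) = chainLabels c' ∨
          List.Lex lblLT (chainLabels (gch σs)) (chainLabels c'))) := by
  intro N
  induction N using Nat.strong_induction_on with
  | _ N IH =>
  intro σs hN
  by_cases h0 : ncross σs.1 = 0
  · -- base case: the unique continuation is the top
    have hg : gch σs = [some σs, none] := by rw [gch_eq, dif_pos h0]
    have hlbls : chainLabels (gch σs) = [Lbl.L] := by rw [hg]; rfl
    refine ⟨⟨?_, ?_, ?_⟩, ?_, ?_⟩
    · rw [hg]; exact List.isChain_cons_cons.2 ⟨h0, List.isChain_singleton _⟩
    · rw [hg]; rfl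
    · rw [hg]; rfl
    · rw [hlbls]; exact List.isChain_singleton _
    · intro c' hc'
      obtain ⟨hch, hhd, hlast⟩ := hc'
      match c', hhd with
      | z :: rest, hhd =>
      have hz : z = some σs := by simpa using hhd
      subst hz
      match rest, hlast with
      | [], hlast => simp at hlast
      | y :: t, hlast =>
      have hcov : Cov (some σs) y := (List.isChain_cons_cons.1 hch).1
      match y with
      | some τ =>
        exfalso
        have := hcov.2
        omega
      | none =>
        match t with
        | [] => left; rw [hlbls]; rfl
        | u :: t' => exact absurd ((List.isChain_cons_cons.1 (List.isChain_cons_cons.1 hch).2).1) (fun h => h)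
  · -- recursive case
    set a0 := minA σs.1 h0 with ha0
    set c0 := minC σs.1 h0 with hc0
    have hcr0 : IsCrossing σs.1 a0 c0 := minCr_cross σs.1 h0
    have hmin0 : ∀ x y, IsCrossing σs.1 x y → a0 < x ∨ (a0 = x ∧ c0 ≤ y) :=
      fun x y hxy => minCr_min σs.1 h0 hxy
    set τ0 : {σ : WDperm n // IsWD σ} := ⟨nestU σs.1 a0 c0, σs.2.nestWD⟩ with hτ0
    have hg : gch σs = some σs :: gch τ0 := by rw [gch_eq, dif_neg h0]
    have hdrop : ncross τ0.1 + 1 = ncross σs.1 :=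
      ncross_nestU σs.2 hcr0 hmin0
    obtain ⟨IH1, IH2, IH3⟩ := IH (ncross τ0.1) (by omega) τ0 rfl
    obtain ⟨l', hgl⟩ : ∃ l', gch τ0 = some τ0 :: l' := by
      have := IH1.2.1
      match hgg : gch τ0 with
      | [] => rw [hgg] at this; simp at this
      | z :: l' =>
        rw [hgg] at this
        simp only [List.head?_cons, Option.some.injEq] at this
        exact ⟨l', by rw [this]⟩
    have hcov0 : Cov (some σs) (some τ0) := ⟨Or.inl ⟨a0, c0, hcr0, rfl⟩, hdrop⟩
    have hlbl0 : lbl (some σs) (some τ0) = Lbl.pair (word σs.1 a0) (word σs.1 c0) :=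
      lbl_nestU σs τ0 hcr0 rfl
    have hstart_a0 : a0 < σs.1 a0 := hcr0.1.trans hcr0.2.1
    have hstart_c0 : c0 < σs.1 c0 := hcr0.2.1.trans hcr0.2.2
    have hwlt0 : word σs.1 a0 < word σs.1 c0 := word_lt_word hstart_a0 hstart_c0 hcr0.1
    have hlabels : chainLabels (gch σs) = lbl (some σs) (some τ0) :: chainLabels (gch τ0) := by
      rw [hg, hgl]; rfl
    refine ⟨⟨?_, ?_, ?_⟩, ?_, ?_⟩
    · rw [hg, hgl]
      exact List.isChain_cons_cons.2 ⟨hcov0, hgl ▸ IH1.1⟩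
    · rw [hg]; rfl
    · rw [hg, hgl, List.getLast?_cons_cons]
      exact hgl ▸ IH1.2.2
    · -- ascending labels
      rw [hlabels]
      refine List.isChain_cons.2 ⟨?_, IH2⟩
      intro p hp
      by_cases h1 : ncross τ0.1 = 0
      · have : chainLabels (gch τ0) = [Lbl.L] := by rw [gch_eq, dif_pos h1]; rfl
        rw [this] at hp
        simp only [List.head?_cons, Option.mem_def, Option.some.injEq] at hp
        subst hp
        rw [hlbl0]
        exact Or.inr (lblLT_asc_L hwlt0)
      · -- compare with the next greedy label
        set a1 := minA τ0.1 h1 with ha1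
        set c1 := minC τ0.1 h1 with hc1
        have hcr1 : IsCrossing τ0.1 a1 c1 := minCr_cross τ0.1 h1
        set τ1 : {σ : WDperm n // IsWD σ} := ⟨nestU τ0.1 a1 c1, τ0.2.nestWD⟩ with hτ1
        have hgl1 : gch τ0 = some τ0 :: gch τ1 := by rw [gch_eq, dif_neg h1]
        obtain ⟨l'', hgl2⟩ : ∃ l'', gch τ1 = some τ1 :: l'' := by
          obtain ⟨J1, _, _⟩ := IH (ncross τ1.1) (by
            have h2 : ncross τ1.1 + 1 = ncross τ0.1 :=
              ncross_nestU τ0.2 hcr1 (fun x y hxy => minCr_min τ0.1 h1 hxy)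
            omega) τ1 rfl
          have := J1.2.1
          match hgg : gch τ1 with
          | [] => rw [hgg] at this; simp at this
          | z :: l'' =>
            rw [hgg] at this
            simp only [List.head?_cons, Option.some.injEq] at this
            exact ⟨l'', by rw [this]⟩
        have hp' : lbl (some τ0) (some τ1) = p := by
          rw [hgl1, hgl2, chainLabels_cons₂] at hp
          simpa using hp
        have hlbl1 : lbl (some τ0) (some τ1) = Lbl.pair (word τ0.1 a1) (word τ0.1 c1) :=
          lbl_nestU τ0 τ1 hcr1 rfl
        subst hp'
        rw [hlbl0, hlbl1]
        -- words of τ0 at starts agree with words of σ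
        have hinv := σs.2.1
        have hstart_a1 : a1 < σs.1 a1 := by
          rw [← start_iff_nestU hinv hcr0 a1]
          exact hcr1.1.trans hcr1.2.1
        have hstart_c1 : c1 < σs.1 c1 := by
          rw [← start_iff_nestU hinv hcr0 c1]
          exact hcr1.2.1.trans hcr1.2.2
        have hwa1 : word τ0.1 a1 = word σs.1 a1 := word_nestU hinv hcr0 hstart_a1
        have hwc1 : word τ0.1 c1 = word σs.1 c1 := word_nestU hinv hcr0 hstart_c1
        have hwlt1 : word τ0.1 a1 < word τ0.1 c1 := by
          rw [hwa1, hwc1]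
          exact word_lt_word hstart_a1 hstart_c1 hcr1.1
        have hge : a0 < a1 ∨ (a0 = a1 ∧ c0 ≤ c1) :=
          nestU_crossing_ge hinv hcr0 hmin0 a1 c1 hcr1
        rcases hge with hlt | ⟨heq, hle⟩
        · exact Or.inr (lblLT_asc hwlt0 hwlt1
            (Or.inl (by rw [hwa1]; exact word_lt_word hstart_a0 hstart_a1 hlt)))
        · rcases lt_or_eq_of_le hle with hltc | heqc
          · refine Or.inr (lblLT_asc hwlt0 hwlt1 (Or.inr ⟨?_, ?_⟩))
            · rw [hwa1, heq]
            · rw [hwc1]; exact word_lt_word hstart_c0 hstart_c1 hltc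
          · left
            rw [hwa1, hwc1, heq, heqc]
    · -- lexicographic minimality
      intro c' hc'
      obtain ⟨hch, hhd, hlast⟩ := hc'
      match c', hhd with
      | z :: rest, hhd =>
      have hz : z = some σs := by simpa using hhd
      subst hz
      match rest, hlast with
      | [], hlast => simp at hlast
      | y :: t, hlast =>
      have hcov : Cov (some σs) y := (List.isChain_cons_cons.1 hch).1
      match y, hcov with
      | none, hcov => exact absurd (hcov : ncross σs.1 = 0) h0
      | some τ, hcov =>
      obtain ⟨hstep, hdrop'⟩ := hcov
      by_cases hyτ : τ = τ0
      · subst hyτ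
        have htail : SatChain (some τ0 :: t) (some τ0) none := by
          refine ⟨(List.isChain_cons_cons.1 hch).2, rfl, ?_⟩
          rwa [List.getLast?_cons_cons] at hlast
        rcases IH3 (some τ0 :: t) htail with heq | hlex
        · left; rw [hlabels, chainLabels_cons₂, heq]
        · right
          rw [hlabels, chainLabels_cons₂]
          exact List.Lex.cons hlex
      · right
        rw [hlabels, chainLabels_cons₂]
        apply List.Lex.rel
        rw [hlbl0]
        rcases hstep with ⟨x, y', hcxy, hτeq⟩ | ⟨x, y', hcxy, hτeq⟩
        · -- nesting step
          have hlblτ : lbl (some σs) (some τ) = Lbl.pair (word σs.1 x) (word σs.1 y') :=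
            lbl_nestU σs τ hcxy hτeq
          rw [hlblτ]
          have hsx : x < σs.1 x := hcxy.1.trans hcxy.2.1
          have hsy : y' < σs.1 y' := hcxy.2.1.trans hcxy.2.2
          have hwxy : word σs.1 x < word σs.1 y' := word_lt_word hsx hsy hcxy.1
          rcases hmin0 x y' hcxy with hlt | ⟨heq, hle⟩
          · exact lblLT_asc hwlt0 hwxy (Or.inl (word_lt_word hstart_a0 hsx hlt))
          · rcases lt_or_eq_of_le hle with hltc | heqc
            · exact lblLT_asc hwlt0 hwxy
                (Or.inr ⟨by rw [heq], word_lt_word hstart_c0 hsy hltc⟩)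
            · exfalso
              apply hyτ
              apply Subtype.ext
              rw [hτeq, hτ0, ← heq, ← heqc]
        · -- disjoint step
          have hlblτ : lbl (some σs) (some τ) = Lbl.pair (word σs.1 y') (word σs.1 x) :=
            lbl_disjU σs τ hcxy hτeq
          rw [hlblτ]
          have hsx : x < σs.1 x := hcxy.1.trans hcxy.2.1
          have hsy : y' < σs.1 y' := hcxy.2.1.trans hcxy.2.2
          exact lblLT_asc_desc hwlt0 (word_lt_word hsx hsy hcxy.1)

end AuxChain

/-- Any lexicographically smallest saturated chain from a wire diagram `D` to `1̂` in `P_n^*`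
has weakly ascending labels. -/
theorem lex_first_chain_to_top_ascending (n : ℕ) (hn : 2 ≤ n)
    (D : {σ : WDperm n // IsWD σ}) (c : List (PStar n))
    (hc : SatChain c (some D) none)
    (hmin : ∀ c' : List (PStar n), SatChain c' (some D) none →
      ¬ List.Lex lblLT (chainLabels c') (chainLabels c)) :
    List.Chain' lblLE (chainLabels c) := by
  obtain ⟨G1, G2, G3⟩ := gch_main (ncross D.1) D rfl
  rcases G3 c hc with heq | hlex
  · rw [← heq]; exact G2
  · exact absurd hlex (hmin (gch D) G1)
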